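/- In any Hamiltonian cycle of the graph G constructed by the reduction, each j-block (the maximal subpath through Y_j, and Z_j when present, together with the A_{ij}'s for neighbors m_i of n_j) is immediately preceded on the cycle by some vertex X_s and immediately followed by some vertex X_t. -/

import Mathlib

/-- The vertex type of the graph `G` constructed from the bipartite graph
`B = (M, N, E)` (with `E i j` meaning `m_i n_j ∈ E`): the vertices `X_i`, `Y_j`,
`Z_j` (only for `j` with `d(n_j) = 3`) and `A_{ij}` (only for edges `m_i n_j`). -/
def Vtx (r : ℕ) (E : Fin r → Fin r → Prop) : Type :=
  {v : Fin r ⊕ Fin r ⊕ Fin r ⊕ Fin r × Fin r //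
    match v with
    | Sum.inl _ => True
    | Sum.inr (Sum.inl _) => True
    | Sum.inr (Sum.inr (Sum.inl j)) => {i : Fin r | E i j}.ncard = 3
    | Sum.inr (Sum.inr (Sum.inr (i, j))) => E i j}

/-- The vertex `X_i`. -/
def Xv {r : ℕ} {E : Fin r → Fin r → Prop} (i : Fin r) : Vtx r E :=
  ⟨Sum.inl i, trivial⟩

/-- The vertex `Y_j`. -/
def Yv {r : ℕ} {E : Fin r → Fin r → Prop} (j : Fin r) : Vtx r E :=
  ⟨Sum.inr (Sum.inl j), trivial⟩

/-- The vertex `Z_j`, present when `d(n_j) = 3`. -/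
def Zv {r : ℕ} {E : Fin r → Fin r → Prop} (j : Fin r)
    (hj : {i : Fin r | E i j}.ncard = 3) : Vtx r E :=
  ⟨Sum.inr (Sum.inr (Sum.inl j)), hj⟩

/-- The vertex `A_{ij}`, present when `m_i n_j ∈ E`. -/
def Av {r : ℕ} {E : Fin r → Fin r → Prop} (i j : Fin r) (h : E i j) : Vtx r E :=
  ⟨Sum.inr (Sum.inr (Sum.inr (i, j))), h⟩

/-- Membership in the clique `K_s = {X_s} ∪ {A_{ij} : m_i n_j ∈ E, i ≤ s}`. -/
def inK {r : ℕ} {E : Fin r → Fin r → Prop} (s : Fin r) (v : Vtx r E) : Prop :=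
  match v.val with
  | Sum.inl s' => s' = s
  | Sum.inr (Sum.inr (Sum.inr (i, _))) => i ≤ s
  | _ => False

/-- Membership in the clique `K'_j = {Y_j} ∪ {A_{ij} : m_i n_j ∈ E}`. -/
def inK' {r : ℕ} {E : Fin r → Fin r → Prop} (j : Fin r) (v : Vtx r E) : Prop :=
  match v.val with
  | Sum.inr (Sum.inl j') => j' = j
  | Sum.inr (Sum.inr (Sum.inr (_, j'))) => j' = j
  | _ => False

/-- Membership in the clique `K''_j = {Z_j} ∪ {A_{ij} : m_i n_j ∈ E}`
(a clique of `G` only when `d(n_j) = 3`). -/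
def inK'' {r : ℕ} {E : Fin r → Fin r → Prop} (j : Fin r) (v : Vtx r E) : Prop :=
  match v.val with
  | Sum.inr (Sum.inr (Sum.inl j')) => j' = j
  | Sum.inr (Sum.inr (Sum.inr (_, j'))) => j' = j
  | _ => False

/-- The graph `G` of the reduction: two distinct vertices are adjacent iff they
lie in a common clique `K_s`, `K'_j`, or `K''_j` (the latter for `d(n_j) = 3`). -/
def Gr (r : ℕ) (E : Fin r → Fin r → Prop) : SimpleGraph (Vtx r E) :=
  SimpleGraph.fromRel (fun u v =>
    (∃ s, inK s u ∧ inK s v) ∨ (∃ j, inK' j u ∧ inK' j v) ∨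
      (∃ j, {i : Fin r | E i j}.ncard = 3 ∧ inK'' j u ∧ inK'' j v))

instance {r : ℕ} {E : Fin r → Fin r → Prop} : DecidableEq (Vtx r E) := by
  unfold Vtx; infer_instance


open SimpleGraph Walk

namespace HamRed

variable {V : Type*} [DecidableEq V] {G : SimpleGraph V}

lemma countP_edges_walk {c d : V} (w : G.Walk c d) (u : V) :
    w.edges.countP (fun e => u ∈ e) + (if u = c then 1 else 0) + (if u = d then 1 else 0)
      = 2 * w.support.count u := by
  induction w with
  | nil =>
      simp only [edges_nil, List.countP_nil, support_nil, List.count_singleton']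
      split_ifs <;> simp_all [eq_comm]
  | @cons a b e h w ih =>
      have hne : a ≠ b := h.ne
      have hcp : (w.edges).countP (fun e => u ∈ e) + (if u = b then 1 else 0)
          + (if u = e then 1 else 0) = 2 * w.support.count u := ih
      simp only [edges_cons, List.countP_cons, support_cons, List.count_cons,
        decide_eq_true_eq, Sym2.mem_iff, beq_iff_eq]
      split_ifs at hcp ⊢ <;> first | omega | (exfalso; subst_vars; tauto)

lemma two_nbrs {b : V} {p : G.Walk b b} (hp : p.IsHamiltonianCycle) (u : V) :
    ∃ x y, x ≠ y ∧ s(u, x) ∈ p.edges ∧ s(u, y) ∈ p.edges ∧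
      ∀ z, s(u, z) ∈ p.edges → z = x ∨ z = y := by
  have hcount : p.support.count u = (if u = b then 2 else 1) := by
    split_ifs with h
    · subst h; exact hp.count_support_self
    · exact hp.support_count_of_ne (Ne.symm h)
  have hcp : p.edges.countP (fun e => u ∈ e) = 2 := by
    have := countP_edges_walk p u
    rw [hcount] at this
    split_ifs at this <;> omega
  have hlen : (p.edges.filter (fun e => u ∈ e)).length = 2 := by
    rw [← List.countP_eq_length_filter]; exact hcp
  have hnd : (p.edges.filter (fun e => u ∈ e)).Nodup := (hp.isCycle.edges_nodup).filter _
  obtain ⟨e1, e2, hl2⟩ := List.length_eq_two.mp hlen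
  have he1 : e1 ∈ p.edges ∧ u ∈ e1 := by
    have : e1 ∈ p.edges.filter (fun e => u ∈ e) := by rw [hl2]; simp
    simpa using List.mem_filter.mp this
  have he2 : e2 ∈ p.edges ∧ u ∈ e2 := by
    have : e2 ∈ p.edges.filter (fun e => u ∈ e) := by rw [hl2]; simp
    simpa using List.mem_filter.mp this
  obtain ⟨x, hx⟩ := Sym2.mem_iff_exists.mp he1.2
  obtain ⟨y, hy⟩ := Sym2.mem_iff_exists.mp he2.2
  have hne : e1 ≠ e2 := by rw [hl2] at hnd; simpa using hnd
  refine ⟨x, y, ?_, hx ▸ he1.1, hy ▸ he2.1, ?_⟩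
  · rintro rfl; exact hne (by rw [hx, hy])
  · intro z hz
    have : s(u, z) ∈ p.edges.filter (fun e => u ∈ e) :=
      List.mem_filter.mpr ⟨hz, by simp⟩
    rw [hl2] at this
    rcases List.mem_pair.mp this with h | h
    · left; exact Sym2.congr_right.mp (h.trans hx)
    · right; exact Sym2.congr_right.mp (h.trans hy)

lemma closed_set {b : V} {p : G.Walk b b} (hp : p.IsHamiltonianCycle) (S : Set V)
    (hS : ∀ u ∈ S, ∀ v, s(u, v) ∈ p.edges → v ∈ S)
    {u0 : V} (hu0 : u0 ∈ S) {w0 : V} (hw0 : w0 ∉ S) : False := by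
  have key : ∀ {c d : V} (w : G.Walk c d), (∀ e ∈ w.edges, e ∈ p.edges) → c ∈ S → d ∈ S := by
    intro c d w
    induction w with
    | nil => exact fun _ h => h
    | @cons a b' e h w ih =>
        intro hsub ha
        exact ih (fun e he => hsub e (by simp [he])) (hS a ha b' (hsub _ (by simp)))
  have hu0s : u0 ∈ p.support := hp.mem_support u0
  have hw0s : w0 ∈ p.support := hp.mem_support w0
  have hb : b ∈ S := by
    refine key ((p.takeUntil u0 hu0s).reverse) ?_ hu0
    intro e he
    rw [edges_reverse, List.mem_reverse] at he
    exact p.edges_takeUntil_subset hu0s he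
  exact hw0 (key (p.takeUntil w0 hw0s) (fun e he => p.edges_takeUntil_subset hw0s he) hb)


variable {r : ℕ} {E : Fin r → Fin r → Prop}

/-- `v` is of `Y`/`Z` type. -/
def isYZ (v : Vtx r E) : Prop := (∃ j, v = Yv j) ∨ (∃ j hj, v = Zv j hj)

lemma Av_inj {i j i' j' : Fin r} {h : E i j} {h' : E i' j'} :
    Av i j h = Av (E := E) i' j' h' ↔ i = i' ∧ j = j' := by
  constructor
  · intro he
    have : (Av i j h).val = (Av (E := E) i' j' h').val := by rw [he]
    simpa [Av] using this
  · rintro ⟨rfl, rfl⟩; rfl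

lemma Av_congr {i j i' j' : Fin r} (hi : i = i') (hj : j = j') {h : E i j} {h' : E i' j'} :
    Av (E := E) i j h = Av i' j' h' := by cases hi; cases hj; rfl

lemma Yv_inj {j j' : Fin r} : (Yv j : Vtx r E) = Yv j' ↔ j = j' := by
  constructor
  · intro he
    have : (Yv (E := E) j).val = (Yv (E := E) j').val := by rw [he]
    simpa [Yv] using this
  · rintro rfl; rfl

lemma adj_Y {j : Fin r} {w : Vtx r E} (h : (Gr r E).Adj (Yv j) w) :
    ∃ i hi, w = Av i j hi := by
  rw [Gr, fromRel_adj] at h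
  obtain ⟨hne, hrel⟩ := h
  obtain ⟨wv, hwp⟩ := w
  rcases wv with i | j' | j' | ⟨i, j'⟩ <;>
      simp [inK, inK', inK'', Yv] at hrel
  · obtain rfl : j' = j := by rcases hrel with h | h; exacts [h, h.symm]
    exact absurd (Subtype.ext rfl) hne
  · obtain rfl : j' = j := by rcases hrel with h | h; exacts [h, h.symm]
    exact ⟨i, hwp, rfl⟩

lemma adj_Z {j : Fin r} {hj : {i : Fin r | E i j}.ncard = 3} {w : Vtx r E}
    (h : (Gr r E).Adj (Zv j hj) w) : ∃ i hi, w = Av i j hi := by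
  rw [Gr, fromRel_adj] at h
  obtain ⟨hne, hrel⟩ := h
  obtain ⟨wv, hwp⟩ := w
  rcases wv with i | j' | j' | ⟨i, j'⟩ <;>
      simp [inK, inK', inK'', Zv] at hrel
  · obtain rfl : j' = j := by rcases hrel with ⟨_, h⟩ | ⟨_, h⟩; exacts [h.symm, h]
    exact absurd (Subtype.ext rfl) hne
  · obtain rfl : j' = j := by rcases hrel with ⟨_, h⟩ | ⟨_, h⟩; exacts [h.symm, h]
    exact ⟨i, hwp, rfl⟩

lemma adj_X {s : Fin r} {w : Vtx r E} (h : (Gr r E).Adj (Xv s) w) :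
    ∃ i j hij, w = Av i j hij := by
  rw [Gr, fromRel_adj] at h
  obtain ⟨hne, hrel⟩ := h
  obtain ⟨wv, hwp⟩ := w
  rcases wv with i | j' | j' | ⟨i, j'⟩ <;>
      simp [inK, inK', inK'', Xv] at hrel
  · obtain rfl : i = s := by rcases hrel with h | h; exacts [h, h.symm]
    exact absurd (Subtype.ext rfl) hne
  · exact ⟨i, j', hwp, rfl⟩

lemma adj_A_YZ {i j : Fin r} {hij : E i j} {w : Vtx r E}
    (h : (Gr r E).Adj (Av i j hij) w) (hw : isYZ w) :
    w = Yv j ∨ ∃ hj, w = Zv j hj := by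
  rw [Gr, fromRel_adj] at h
  obtain ⟨hne, hrel⟩ := h
  rcases hw with ⟨j', rfl⟩ | ⟨j', hj', rfl⟩ <;>
      simp [inK, inK', inK'', Yv, Zv, Av] at hrel
  · obtain rfl : j' = j := by rcases hrel with h | h; exacts [h, h.symm]
    exact Or.inl rfl
  · obtain rfl : j' = j := by rcases hrel with ⟨_, h⟩ | ⟨_, h⟩; exacts [h.symm, h]
    exact Or.inr ⟨hj', rfl⟩

lemma pigeon3 {α : Type*} {x y z u1 u2 : α} (hxy : x ≠ y) (hxz : x ≠ z) (hyz : y ≠ z)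
    (h1 : x = u1 ∨ x = u2) (h2 : y = u1 ∨ y = u2) (h3 : z = u1 ∨ z = u2) : False := by
  rcases h1 with rfl | rfl <;> rcases h2 with h2 | h2 <;> rcases h3 with h3 | h3 <;> grind

lemma cover3 {α : Type*} {a b c m pp qq : α}
    (hm : m = a ∨ m = b ∨ m = c) (hp : pp = a ∨ pp = b ∨ pp = c)
    (hq : qq = a ∨ qq = b ∨ qq = c) (mp : m ≠ pp) (mq : m ≠ qq) (pq : pp ≠ qq)
    {x : α} (hx : x = a ∨ x = b ∨ x = c) : x = m ∨ x = pp ∨ x = qq := by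
  rcases hm with rfl | rfl | rfl <;> rcases hp with rfl | rfl | rfl <;>
    rcases hq with rfl | rfl | rfl <;> rcases hx with rfl | rfl | rfl <;> grind

lemma Xv_inj {s s' : Fin r} : (Xv s : Vtx r E) = Xv s' ↔ s = s' := by
  constructor
  · intro he
    have : (Xv (E := E) s).val = (Xv (E := E) s').val := by rw [he]
    simpa [Xv] using this
  · rintro rfl; rfl

lemma Zv_irrel {j : Fin r} {h h' : {i : Fin r | E i j}.ncard = 3} :
    (Zv j h : Vtx r E) = Zv j h' := Subtype.ext rfl

lemma Xv_ne_Yv {s j : Fin r} : (Xv s : Vtx r E) ≠ Yv j := by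
  intro h; exact absurd (congrArg Subtype.val h) (by simp [Xv, Yv])

lemma Xv_ne_Zv {s j : Fin r} {hj} : (Xv s : Vtx r E) ≠ Zv j hj := by
  intro h; exact absurd (congrArg Subtype.val h) (by simp [Xv, Zv])

lemma Xv_ne_Av {s i j : Fin r} {hij : E i j} : (Xv s : Vtx r E) ≠ Av i j hij := by
  intro h; exact absurd (congrArg Subtype.val h) (by simp [Xv, Av])

lemma Yv_ne_Zv {j j' : Fin r} {hj} : (Yv j : Vtx r E) ≠ Zv j' hj := by
  intro h; exact absurd (congrArg Subtype.val h) (by simp [Yv, Zv])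

lemma Yv_ne_Av {j i j' : Fin r} {hij : E i j'} : (Yv j : Vtx r E) ≠ Av i j' hij := by
  intro h; exact absurd (congrArg Subtype.val h) (by simp [Yv, Av])

lemma Zv_ne_Av {j : Fin r} {hj : {i : Fin r | E i j}.ncard = 3} {i j' : Fin r} {hij : E i j'} : (Zv j hj : Vtx r E) ≠ Av i j' hij := by
  intro h; exact absurd (congrArg Subtype.val h) (by simp [Zv, Av])

lemma isYZ_Yv {j : Fin r} : isYZ (Yv j : Vtx r E) := Or.inl ⟨j, rfl⟩

lemma isYZ_Zv {j : Fin r} {hj} : isYZ (Zv j hj : Vtx r E) := Or.inr ⟨j, hj, rfl⟩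

lemma not_isYZ_Xv {s : Fin r} : ¬ isYZ (Xv s : Vtx r E) := by
  rintro (⟨j, h⟩ | ⟨j, hj, h⟩)
  exacts [Xv_ne_Yv h, Xv_ne_Zv h]

lemma not_isYZ_Av {i j : Fin r} {hij : E i j} : ¬ isYZ (Av i j hij : Vtx r E) := by
  rintro (⟨j', h⟩ | ⟨j', hj', h⟩)
  exacts [Yv_ne_Av h.symm, Zv_ne_Av h.symm]

lemma isYZ_ne_Xv {w : Vtx r E} (h : isYZ w) {s : Fin r} : w ≠ Xv s := by
  rintro rfl; exact not_isYZ_Xv h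

/-- Shape case analysis for a vertex. -/
lemma vtx_cases (v : Vtx r E) :
    (∃ s, v = Xv s) ∨ (∃ j, v = Yv j) ∨ (∃ j hj, v = Zv j hj) ∨
      (∃ i j hij, v = Av i j hij) := by
  obtain ⟨vv, hvp⟩ := v
  rcases vv with i | j | j | ⟨i, j⟩
  · exact Or.inl ⟨i, rfl⟩
  · exact Or.inr (Or.inl ⟨j, rfl⟩)
  · exact Or.inr (Or.inr (Or.inl ⟨j, hvp, rfl⟩))
  · exact Or.inr (Or.inr (Or.inr ⟨i, j, hvp, rfl⟩))

lemma mem_pair_resolve {α : Type*} {u1 u2 a b v : α} (hab : a ≠ b)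
    (ha : a = u1 ∨ a = u2) (hb : b = u1 ∨ b = u2) (hv : v = u1 ∨ v = u2) :
    v = a ∨ v = b := by
  rcases ha with rfl | rfl <;> rcases hb with hb | hb <;> rcases hv with rfl | rfl <;> grind

lemma cover2 {α : Type*} {a b a1 a2 x : α} (h1 : a1 = a ∨ a1 = b) (h2 : a2 = a ∨ a2 = b)
    (h12 : a1 ≠ a2) (hx : x = a ∨ x = b) : x = a1 ∨ x = a2 := by
  rcases h1 with rfl | rfl <;> rcases h2 with h2 | h2 <;> rcases hx with rfl | rfl <;> grind

lemma pigeon43 {α : Type*} {a b c x1 x2 x3 x4 : α}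
    (h1 : x1 = a ∨ x1 = b ∨ x1 = c) (h2 : x2 = a ∨ x2 = b ∨ x2 = c)
    (h3 : x3 = a ∨ x3 = b ∨ x3 = c) (h4 : x4 = a ∨ x4 = b ∨ x4 = c)
    (h12 : x1 ≠ x2) (h13 : x1 ≠ x3) (h14 : x1 ≠ x4) (h23 : x2 ≠ x3) (h24 : x2 ≠ x4)
    (h34 : x3 ≠ x4) : False := by
  rcases h1 with rfl | rfl | rfl <;> rcases h2 with h2 | h2 | h2 <;>
    rcases h3 with h3 | h3 | h3 <;> rcases h4 with h4 | h4 | h4 <;> grind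

section cycle

variable {b : Vtx r E} {p : (Gr r E).Walk b b}

/-- `a` is a "block endpoint": it has a `Y`/`Z`-type cycle neighbour and a
non-`Y`/`Z`-type cycle neighbour. -/
def Ept (p : (Gr r E).Walk b b) (a : Vtx r E) : Prop :=
  ∃ w x, w ≠ x ∧ s(a, w) ∈ p.edges ∧ s(a, x) ∈ p.edges ∧ isYZ w ∧ ¬ isYZ x

lemma fourcycle (hp : p.IsHamiltonianCycle) (hr : 2 ≤ r) {j : Fin r}
    {hj : {i : Fin r | E i j}.ncard = 3} {a1 a2 : Fin r} {ha1 : E a1 j} {ha2 : E a2 j}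
    (hne : a1 ≠ a2)
    (eY1 : s(Yv j, Av a1 j ha1) ∈ p.edges) (eY2 : s(Yv j, Av a2 j ha2) ∈ p.edges)
    (eZ1 : s(Zv j hj, Av a1 j ha1) ∈ p.edges) (eZ2 : s(Zv j hj, Av a2 j ha2) ∈ p.edges) :
    False := by
  have hAne : (Av a1 j ha1 : Vtx r E) ≠ Av a2 j ha2 := by
    intro h; exact hne (Av_inj.mp h).1
  have hYZ : (Yv j : Vtx r E) ≠ Zv j hj := Yv_ne_Zv
  set S : Set (Vtx r E) := {Yv j, Zv j hj, Av a1 j ha1, Av a2 j ha2} with hS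
  have hclosed : ∀ u ∈ S, ∀ v, s(u, v) ∈ p.edges → v ∈ S := by
    intro u hu v hv
    obtain ⟨x1, y1, h11, e1, e2, comp⟩ := two_nbrs hp u
    rcases hu with rfl | rfl | rfl | rfl
    · rcases mem_pair_resolve hAne (comp _ eY1) (comp _ eY2) (comp v hv) with rfl | rfl
      · exact Or.inr (Or.inr (Or.inl rfl))
      · exact Or.inr (Or.inr (Or.inr rfl))
    · rcases mem_pair_resolve hAne (comp _ eZ1) (comp _ eZ2) (comp v hv) with rfl | rfl
      · exact Or.inr (Or.inr (Or.inl rfl))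
      · exact Or.inr (Or.inr (Or.inr rfl))
    · have eY : s(Av a1 j ha1, Yv j) ∈ p.edges := by rwa [Sym2.eq_swap]
      have eZ : s(Av a1 j ha1, Zv j hj) ∈ p.edges := by rwa [Sym2.eq_swap]
      rcases mem_pair_resolve hYZ (comp _ eY) (comp _ eZ) (comp v hv) with rfl | rfl
      · exact Or.inl rfl
      · exact Or.inr (Or.inl rfl)
    · have eY : s(Av a2 j ha2, Yv j) ∈ p.edges := by rwa [Sym2.eq_swap]
      have eZ : s(Av a2 j ha2, Zv j hj) ∈ p.edges := by rwa [Sym2.eq_swap]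
      rcases mem_pair_resolve hYZ (comp _ eY) (comp _ eZ) (comp v hv) with rfl | rfl
      · exact Or.inl rfl
      · exact Or.inr (Or.inl rfl)
  have hmemY : (Yv j : Vtx r E) ∈ S := by left; rfl
  have hX : (Xv ⟨0, by omega⟩ : Vtx r E) ∉ S := by
    rintro (h | h | h | h)
    exacts [Xv_ne_Yv h, Xv_ne_Zv h, Xv_ne_Av h, Xv_ne_Av h]
  exact closed_set hp S hclosed hmemY hX

lemma middlecase (hp : p.IsHamiltonianCycle) {j : Fin r}
    {hj : {i : Fin r | E i j}.ncard = 3} {m pp qq : Fin r} {hm : E m j} {hpp : E pp j}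
    {hqq : E qq j}
    (hcov : ∀ i, E i j → i = m ∨ i = pp ∨ i = qq)
    (eYm : s(Yv j, Av m j hm) ∈ p.edges) (eYp : s(Yv j, Av pp j hpp) ∈ p.edges)
    (eZm : s(Zv j hj, Av m j hm) ∈ p.edges) (eZq : s(Zv j hj, Av qq j hqq) ∈ p.edges) :
    ∃ i1 i2, (∀ i (h : E i j), ∃ w, isYZ w ∧ s(Av i j h, w) ∈ p.edges) ∧
      (∀ i (h : E i j), Ept p (Av i j h) → i = i1 ∨ i = i2) := by
  refine ⟨pp, qq, ?_, ?_⟩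
  · intro i hi
    rcases hcov i hi with h | h | h <;> subst h
    · exact ⟨Yv j, isYZ_Yv, by rwa [Sym2.eq_swap]⟩
    · exact ⟨Yv j, isYZ_Yv, by rwa [Sym2.eq_swap]⟩
    · exact ⟨Zv j hj, isYZ_Zv, by rwa [Sym2.eq_swap]⟩
  · intro i hi hept
    rcases hcov i hi with h | h | h
    · exfalso
      obtain ⟨w, t, hwt, hew, het, hYZw, hnt⟩ := hept
      have hAe : (Av i j hi : Vtx r E) = Av m j hm := by cases h; rfl
      rw [hAe] at het
      obtain ⟨u1, u2, h12, e1, e2, comp⟩ := two_nbrs hp (Av m j hm)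
      have eY : s(Av m j hm, Yv j) ∈ p.edges := by rwa [Sym2.eq_swap]
      have eZ : s(Av m j hm, Zv j hj) ∈ p.edges := by rwa [Sym2.eq_swap]
      have hYZ : (Yv j : Vtx r E) ≠ Zv j hj := Yv_ne_Zv
      rcases mem_pair_resolve hYZ (comp _ eY) (comp _ eZ) (comp t het) with rfl | rfl
      · exact hnt isYZ_Yv
      · exact hnt isYZ_Zv
    · exact Or.inl h
    · exact Or.inr h

lemma percol (hp : p.IsHamiltonianCycle) (hr : 2 ≤ r) (j : Fin r)
    (hdj : {i : Fin r | E i j}.ncard = 2 ∨ {i : Fin r | E i j}.ncard = 3) :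
    ∃ i1 i2, (∀ i (h : E i j), ∃ w, isYZ w ∧ s(Av i j h, w) ∈ p.edges) ∧
      (∀ i (h : E i j), Ept p (Av i j h) → i = i1 ∨ i = i2) := by
  classical
  obtain ⟨x, y, hxy, hex, hey, hYcomp⟩ := two_nbrs hp (Yv j)
  obtain ⟨a1, ha1, rfl⟩ := adj_Y (p.adj_of_mem_edges hex)
  obtain ⟨a2, ha2, rfl⟩ := adj_Y (p.adj_of_mem_edges hey)
  have ha12 : a1 ≠ a2 := fun h => hxy (by cases h; rfl)
  rcases hdj with hc2 | hc3
  · obtain ⟨a, b', hab, hset⟩ := Set.ncard_eq_two.mp hc2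
    have hmem : ∀ i, E i j → i = a ∨ i = b' := by
      intro i hi
      have : i ∈ ({a, b'} : Set (Fin r)) := by rw [← hset]; exact hi
      simpa using this
    have hcov : ∀ i, E i j → i = a1 ∨ i = a2 :=
      fun i hi => cover2 (hmem a1 ha1) (hmem a2 ha2) ha12 (hmem i hi)
    refine ⟨a1, a2, ?_, fun i hi _ => hcov i hi⟩
    intro i hi
    rcases hcov i hi with h | h <;> subst h
    · exact ⟨Yv j, isYZ_Yv, by rwa [Sym2.eq_swap]⟩
    · exact ⟨Yv j, isYZ_Yv, by rwa [Sym2.eq_swap]⟩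
  · obtain ⟨a, b', c, hab, hac, hbc, hset⟩ := Set.ncard_eq_three.mp hc3
    have hmem : ∀ i, E i j → i = a ∨ i = b' ∨ i = c := by
      intro i hi
      have : i ∈ ({a, b', c} : Set (Fin r)) := by rw [← hset]; exact hi
      simpa using this
    obtain ⟨zx, zy, hzxy, hezx, hezy, hZcomp⟩ := two_nbrs hp (Zv j hc3)
    obtain ⟨b1, hb1, rfl⟩ := adj_Z (p.adj_of_mem_edges hezx)
    obtain ⟨b2, hb2, rfl⟩ := adj_Z (p.adj_of_mem_edges hezy)
    have hb12 : b1 ≠ b2 := fun h => hzxy (by cases h; rfl)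
    have hnotsame : ¬ ((a1 = b1 ∧ a2 = b2) ∨ (a1 = b2 ∧ a2 = b1)) := by
      rintro (⟨h1, h2⟩ | ⟨h1, h2⟩)
      · cases h1; cases h2
        exact fourcycle hp hr ha12 hex hey hezx hezy
      · cases h1; cases h2
        exact fourcycle hp hr ha12 hex hey hezy hezx
    by_cases e11 : a1 = b1
    · cases e11
      have e22 : a2 ≠ b2 := fun h => hnotsame (Or.inl ⟨rfl, h⟩)
      exact middlecase hp
        (fun i hi => cover3 (hmem a1 ha1) (hmem a2 ha2) (hmem b2 hb2) ha12
          hb12 e22 (hmem i hi)) hex hey hezx hezy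
    · by_cases e12 : a1 = b2
      · cases e12
        have e21 : a2 ≠ b1 := fun h => hnotsame (Or.inr ⟨rfl, h⟩)
        exact middlecase hp
          (fun i hi => cover3 (hmem a1 ha1) (hmem a2 ha2) (hmem b1 hb1) ha12
            (fun h => hb12 h.symm) e21 (hmem i hi)) hex hey hezy hezx
      · by_cases e21 : a2 = b1
        · cases e21
          exact middlecase hp
            (fun i hi => cover3 (hmem a2 ha2) (hmem a1 ha1) (hmem b2 hb2)
              (fun h => ha12 h.symm) hb12 e12 (hmem i hi)) hey hex hezx hezy
        · by_cases e22 : a2 = b2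
          · cases e22
            exact middlecase hp
              (fun i hi => cover3 (hmem a2 ha2) (hmem a1 ha1) (hmem b1 hb1)
                (fun h => ha12 h.symm) (fun h => hb12 h.symm) e11
                (hmem i hi)) hey hex hezy hezx
          · exact absurd rfl (fun _ : (0:ℕ) = 0 =>
              pigeon43 (hmem a1 ha1) (hmem a2 ha2) (hmem b1 hb1) (hmem b2 hb2)
                ha12 e11 e12 e21 e22 hb12)

lemma global (hp : p.IsHamiltonianCycle) (hr : 2 ≤ r)
    (hdeg : ∀ j : Fin r, {i : Fin r | E i j}.ncard = 2 ∨ {i : Fin r | E i j}.ncard = 3)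
    (i j : Fin r) (hij : E i j) (v : Vtx r E) (hv : s(Av i j hij, v) ∈ p.edges) :
    (∃ s, v = Xv s) ∨ isYZ v := by
  classical
  by_contra hcon
  push_neg at hcon
  obtain ⟨hnx, hnyz⟩ := hcon
  obtain ⟨i', j', h', rfl⟩ : ∃ i' j' h', v = Av i' j' h' := by
    rcases vtx_cases v with ⟨s, rfl⟩ | ⟨j', rfl⟩ | ⟨j', hj', rfl⟩ | h
    · exact absurd rfl (hnx s)
    · exact absurd isYZ_Yv hnyz
    · exact absurd isYZ_Zv hnyz
    · exact h
  choose i1 i2 hyz hcls using fun j0 => percol hp hr j0 (hdeg j0)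
  choose n1 n2 hnn hn1 hn2 hncomp using fun s : Fin r => two_nbrs hp (Xv s)
  set gg : Fin r × Bool → Vtx r E := fun x => if x.2 then n1 x.1 else n2 x.1 with hgg
  have hggE : ∀ x : Fin r × Bool, s(Xv x.1, gg x) ∈ p.edges := by
    rintro ⟨s, bb⟩; cases bb <;> simp only [hgg, if_true, if_false, Bool.false_eq_true]
    exacts [hn2 s, hn1 s]
  have hggA : ∀ x : Fin r × Bool, ∃ a ba, ∃ hab : E a ba, gg x = Av a ba hab := by
    intro x; exact adj_X (p.adj_of_mem_edges (hggE x))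
  choose row col hEr hgeq using hggA
  -- an A-vertex with an X-neighbour is an endpoint
  have EptX : ∀ (a ba : Fin r) (hab : E a ba) (s : Fin r),
      s(Av a ba hab, Xv s) ∈ p.edges → Ept p (Av a ba hab) := by
    intro a ba hab s hs
    obtain ⟨w, hwYZ, hew⟩ := hyz ba a hab
    exact ⟨w, Xv s, isYZ_ne_Xv hwYZ, hew, hs, hwYZ, not_isYZ_Xv⟩
  -- gg is injective
  have hggInj : ∀ x x' : Fin r × Bool, gg x = gg x' → x = x' := by
    rintro ⟨s, bb⟩ ⟨s', bb'⟩ hE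
    by_cases hs : s = s'
    · subst hs
      cases bb <;> cases bb'
      · rfl
      · exact absurd (show n2 s = n1 s by simpa [hgg] using hE).symm (hnn s)
      · exact absurd (show n1 s = n2 s by simpa [hgg] using hE) (hnn s)
      · rfl
    · exfalso
      obtain ⟨w, hwYZ, hew⟩ := hyz (col (s, bb)) (row (s, bb)) (hEr (s, bb))
      rw [← hgeq (s, bb)] at hew
      obtain ⟨u1, u2, h12, e1, e2, comp⟩ := two_nbrs hp (gg (s, bb))
      have hx1 : s(gg (s, bb), Xv s) ∈ p.edges := by
        rw [Sym2.eq_swap]; exact hggE (s, bb)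
      have hx2 : s(gg (s, bb), Xv s') ∈ p.edges := by
        rw [Sym2.eq_swap, hE]; exact hggE (s', bb')
      exact pigeon3 (fun h => hs (Xv_inj.mp h))
        (fun h => isYZ_ne_Xv hwYZ h.symm) (fun h => isYZ_ne_Xv hwYZ h.symm)
        (comp _ hx1) (comp _ hx2) (comp _ hew)
  have XE : ∀ x : Fin r × Bool, s(Av (row x) (col x) (hEr x), Xv x.1) ∈ p.edges := by
    intro x
    have h0 := hggE x
    rw [Sym2.eq_swap, hgeq x] at h0
    exact h0
  have EPT : ∀ x : Fin r × Bool, Ept p (Av (row x) (col x) (hEr x)) :=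
    fun x => EptX (row x) (col x) (hEr x) x.1 (XE x)
  have HRX : ∀ x : Fin r × Bool, row x = i1 (col x) ∨ row x = i2 (col x) :=
    fun x => hcls _ _ (hEr x) (EPT x)
  -- the index map
  set ψ : Fin r × Bool → Fin r × Bool :=
    fun x => (col x, decide (row x = i1 (col x))) with hψ
  have hψInj : Function.Injective ψ := by
    intro x x' h
    have hcol : col x = col x' := (Prod.ext_iff.mp h).1
    have hdec : decide (row x = i1 (col x)) = decide (row x' = i1 (col x')) :=
      (Prod.ext_iff.mp h).2
    have hrx : row x = i1 (col x) ∨ row x = i2 (col x) := HRX x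
    have hrx' : row x' = i1 (col x') ∨ row x' = i2 (col x') := HRX x'
    have hrow : row x = row x' := by
      by_cases hd : row x = i1 (col x)
      · have hd' : row x' = i1 (col x') := by
          rw [← decide_eq_true_eq (p := row x' = i1 (col x')), ← hdec,
            decide_eq_true_eq]
          exact hd
        rw [hd, hd', hcol]
      · have hd' : ¬ row x' = i1 (col x') := by
          rw [← decide_eq_true_eq (p := row x' = i1 (col x')), ← hdec,
            decide_eq_true_eq]
          exact hd
        rcases hrx with h | h
        · exact absurd h hd
        · rcases hrx' with h' | h'
          · exact absurd h' hd'
          · rw [h, h', hcol]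
    apply hggInj
    rw [hgeq x, hgeq x']
    exact Av_congr hrow hcol
  -- the missing index
  have ha0nbrs : ∀ z, s(Av i j hij, z) ∈ p.edges → z = Av i' j' h' ∨ isYZ z := by
    obtain ⟨w, hwYZ, hew⟩ := hyz j i hij
    obtain ⟨u1, u2, h12, e1, e2, comp⟩ := two_nbrs hp (Av i j hij)
    intro z hz
    have hwv : w ≠ Av i' j' h' := by
      rintro rfl; exact not_isYZ_Av hwYZ
    rcases mem_pair_resolve hwv (comp _ hew) (comp _ hv) (comp _ hz) with rfl | rfl
    · exact Or.inr hwYZ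
    · exact Or.inl rfl
  have hEa0 : Ept p (Av i j hij) := by
    obtain ⟨w, hwYZ, hew⟩ := hyz j i hij
    refine ⟨w, Av i' j' h', ?_, hew, hv, hwYZ, not_isYZ_Av⟩
    rintro rfl; exact not_isYZ_Av hwYZ
  set y0 : Fin r × Bool := (j, decide (i = i1 j)) with hy0
  have hmiss : ∀ x, ψ x ≠ y0 := by
    intro x hx
    have hcol : col x = j := (Prod.ext_iff.mp hx).1
    have hdec : decide (row x = i1 (col x)) = decide (i = i1 j) :=
      (Prod.ext_iff.mp hx).2
    have hrx : row x = i1 (col x) ∨ row x = i2 (col x) := HRX x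
    have hia0 : i = i1 j ∨ i = i2 j := hcls j i hij hEa0
    have hrow : row x = i := by
      by_cases hd : row x = i1 (col x)
      · have hd' : i = i1 j := by
          rw [← decide_eq_true_eq (p := i = i1 j), ← hdec, decide_eq_true_eq]
          exact hd
        rw [hd, hd', hcol]
      · have hd' : ¬ i = i1 j := by
          rw [← decide_eq_true_eq (p := i = i1 j), ← hdec, decide_eq_true_eq]
          exact hd
        rcases hrx with h | h
        · exact absurd h hd
        · rcases hia0 with h' | h'
          · exact absurd h' hd'
          · rw [h, h', hcol]
    have hgga0 : gg x = Av i j hij := by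
      rw [hgeq x]; exact Av_congr hrow hcol
    have hX : s(Av i j hij, Xv x.1) ∈ p.edges := by
      rw [← hgga0, Sym2.eq_swap]; exact hggE x
    rcases ha0nbrs _ hX with h | h
    · exact Xv_ne_Av h
    · exact not_isYZ_Xv h
  obtain ⟨x, hx⟩ := Finite.injective_iff_surjective.mp hψInj y0
  exact hmiss x hx

end cycle

end HamRed

/-- In any Hamiltonian cycle of the graph `G` of the reduction, each `j`-block
(the forced subpath `A_{ij}, Y_j, A_{hj}, Z_j, A_{kj}` when `d(n_j) = 3`, or
`A_{ij}, Y_j, A_{kj}` when `d(n_j) = 2`) is immediately preceded on the cycle by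
some vertex `X_s` and immediately followed by some vertex `X_t`: the
cycle-neighbor of each endpoint of the block other than its neighbor inside the
block is an `X`-vertex. -/
theorem stmt_13 (r : ℕ) (hr : 2 ≤ r) (E : Fin r → Fin r → Prop)
    (hdeg : ∀ j : Fin r, {i : Fin r | E i j}.ncard = 2 ∨ {i : Fin r | E i j}.ncard = 3)
    {b : Vtx r E} (p : (Gr r E).Walk b b) (hp : p.IsHamiltonianCycle) :
    (∀ (j : Fin r) (hj : {i : Fin r | E i j}.ncard = 3)
        (i h k : Fin r) (hi : E i j) (hh : E h j) (hk : E k j),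
      i ≠ h → h ≠ k → i ≠ k →
      s(Av i j hi, Yv j) ∈ p.edges → s(Yv j, Av h j hh) ∈ p.edges →
      s(Av h j hh, Zv j hj) ∈ p.edges → s(Zv j hj, Av k j hk) ∈ p.edges →
      (∀ v : Vtx r E, s(v, Av i j hi) ∈ p.edges → v = Yv j ∨ ∃ s : Fin r, v = Xv s) ∧
      (∀ v : Vtx r E, s(v, Av k j hk) ∈ p.edges →
        v = Zv j hj ∨ ∃ t : Fin r, v = Xv t)) ∧
    (∀ (j : Fin r), {i : Fin r | E i j}.ncard = 2 →
      ∀ (i k : Fin r) (hi : E i j) (hk : E k j), i ≠ k →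
      s(Av i j hi, Yv j) ∈ p.edges → s(Yv j, Av k j hk) ∈ p.edges →
      (∀ v : Vtx r E, s(v, Av i j hi) ∈ p.edges → v = Yv j ∨ ∃ s : Fin r, v = Xv s) ∧
      (∀ v : Vtx r E, s(v, Av k j hk) ∈ p.edges →
        v = Yv j ∨ ∃ t : Fin r, v = Xv t)) := by
  classical
  constructor
  · intro j hj i h k hi hh hk hih hhk hik eiY eYh ehZ eZk
    constructor
    · intro v hv
      have hv' : s(Av i j hi, v) ∈ p.edges := by rwa [Sym2.eq_swap] at hv
      rcases HamRed.global hp hr hdeg i j hi v hv' with ⟨s, rfl⟩ | hYZv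
      · exact Or.inr ⟨s, rfl⟩
      rcases HamRed.adj_A_YZ (p.adj_of_mem_edges hv') hYZv with rfl | ⟨hj2, rfl⟩
      · exact Or.inl rfl
      exfalso
      obtain ⟨u1, u2, h12, e1, e2, comp⟩ := HamRed.two_nbrs hp (Zv j hj2)
      have eZh : s(Zv j hj2, Av h j hh) ∈ p.edges := by rwa [Sym2.eq_swap] at ehZ
      have eZk' : s(Zv j hj2, Av k j hk) ∈ p.edges := eZk
      have eZi : s(Zv j hj2, Av i j hi) ∈ p.edges := hv
      exact HamRed.pigeon3
        (fun he => hhk (HamRed.Av_inj.mp he).1)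
        (fun he => (fun hh' => hih hh'.symm) (HamRed.Av_inj.mp he).1)
        (fun he => (fun hh' => hik hh'.symm) (HamRed.Av_inj.mp he).1)
        (comp _ eZh) (comp _ eZk') (comp _ eZi)
    · intro v hv
      have hv' : s(Av k j hk, v) ∈ p.edges := by rwa [Sym2.eq_swap] at hv
      rcases HamRed.global hp hr hdeg k j hk v hv' with ⟨s, rfl⟩ | hYZv
      · exact Or.inr ⟨s, rfl⟩
      rcases HamRed.adj_A_YZ (p.adj_of_mem_edges hv') hYZv with rfl | ⟨hj2, rfl⟩
      · exfalso
        obtain ⟨u1, u2, h12, e1, e2, comp⟩ := HamRed.two_nbrs hp (Yv j)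
        have eYi : s(Yv j, Av i j hi) ∈ p.edges := by rwa [Sym2.eq_swap] at eiY
        have eYh' : s(Yv j, Av h j hh) ∈ p.edges := eYh
        have eYk : s(Yv j, Av k j hk) ∈ p.edges := hv
        exact HamRed.pigeon3
          (fun he => hih (HamRed.Av_inj.mp he).1)
          (fun he => hik (HamRed.Av_inj.mp he).1)
          (fun he => hhk (HamRed.Av_inj.mp he).1)
          (comp _ eYi) (comp _ eYh') (comp _ eYk)
      · exact Or.inl HamRed.Zv_irrel
  · intro j hc2 i k hi hk hik eiY eYk
    constructor
    · intro v hv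
      have hv' : s(Av i j hi, v) ∈ p.edges := by rwa [Sym2.eq_swap] at hv
      rcases HamRed.global hp hr hdeg i j hi v hv' with ⟨s, rfl⟩ | hYZv
      · exact Or.inr ⟨s, rfl⟩
      rcases HamRed.adj_A_YZ (p.adj_of_mem_edges hv') hYZv with rfl | ⟨hj2, rfl⟩
      · exact Or.inl rfl
      · exact absurd hc2 (by rw [hj2]; omega)
    · intro v hv
      have hv' : s(Av k j hk, v) ∈ p.edges := by rwa [Sym2.eq_swap] at hv
      rcases HamRed.global hp hr hdeg k j hk v hv' with ⟨s, rfl⟩ | hYZv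
      · exact Or.inr ⟨s, rfl⟩
      rcases HamRed.adj_A_YZ (p.adj_of_mem_edges hv') hYZv with rfl | ⟨hj2, rfl⟩
      · exact Or.inl rfl
      · exact absurd hc2 (by rw [hj2]; omega)
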